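/- Let f be a Boolean network of dimension n. If x and y are two distinct fixed points of f, then the interaction graph G(f) contains a positive cycle C such that x_v ≠ y_v for every vertex v of C. -/

import Mathlib

/-- Asynchronous transition: update one vertex `u` where `f` disagrees with `x`. -/
def AsyncStep {n : ℕ} (f : (Fin n → Bool) → (Fin n → Bool)) (x z : Fin n → Bool) : Prop :=
  ∃ u : Fin n, f x u ≠ x u ∧ z = Function.update x u (f x u)

/-- Reachability: reflexive-transitive closure of the asynchronous transition relation. -/
def Reach {n : ℕ} (f : (Fin n → Bool) → (Fin n → Bool)) :
    (Fin n → Bool) → (Fin n → Bool) → Prop :=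
  Relation.ReflTransGen (AsyncStep f)

/-- An attractor: nonempty, closed under transitions, strongly connected for reachability. -/
def IsAttractor {n : ℕ} (f : (Fin n → Bool) → (Fin n → Bool)) (S : Set (Fin n → Bool)) : Prop :=
  S.Nonempty ∧ (∀ x ∈ S, ∀ z, AsyncStep f x z → z ∈ S) ∧ (∀ x ∈ S, ∀ z ∈ S, Reach f x z)

/-- Positive edge of the interaction graph `G(f)`. -/
def PosEdge {n : ℕ} (f : (Fin n → Bool) → (Fin n → Bool)) (u v : Fin n) : Prop :=
  ∃ x : Fin n → Bool,
    f (Function.update x u true) v = true ∧ f (Function.update x u false) v = false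

/-- Negative edge of the interaction graph `G(f)`. -/
def NegEdge {n : ℕ} (f : (Fin n → Bool) → (Fin n → Bool)) (u v : Fin n) : Prop :=
  ∃ x : Fin n → Bool,
    f (Function.update x u true) v = false ∧ f (Function.update x u false) v = true

/-- Signed edge (`true` = positive, `false` = negative). -/
def SignedEdge {n : ℕ} (f : (Fin n → Bool) → (Fin n → Bool)) (u v : Fin n) (s : Bool) : Prop :=
  match s with
  | true => PosEdge f u v
  | false => NegEdge f u v

/-- A cycle of `G(f)`: a nonempty list of signed edges, consecutively chained,
the last edge returning to the source of the first. -/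
def IsCycle {n : ℕ} (f : (Fin n → Bool) → (Fin n → Bool))
    (es : List (Fin n × Fin n × Bool)) : Prop :=
  es ≠ [] ∧ (∀ e ∈ es, SignedEdge f e.1 e.2.1 e.2.2) ∧
  es.Chain' (fun e e' => e.2.1 = e'.1) ∧
  es.getLast?.map (fun e => e.2.1) = es.head?.map (fun e => e.1)

/-- A positive cycle: a cycle traversing an even number of negative edges. -/
def IsPosCycle {n : ℕ} (f : (Fin n → Bool) → (Fin n → Bool))
    (es : List (Fin n × Fin n × Bool)) : Prop :=
  IsCycle f es ∧ Even (es.countP (fun e => !e.2.2))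

/-- Unsigned edge of the interaction graph. -/
def EdgeU {n : ℕ} (f : (Fin n → Bool) → (Fin n → Bool)) (u v : Fin n) : Prop :=
  PosEdge f u v ∨ NegEdge f u v

/-- `v` is an ancestor of `u`: nonempty directed path from `v` to `u` in `G(f)`. -/
def Ancestor {n : ℕ} (f : (Fin n → Bool) → (Fin n → Bool)) (v u : Fin n) : Prop :=
  Relation.TransGen (EdgeU f) v u

/-- `u` and `v` are in the same strongly connected component of (the unsigned) `G(f)`. -/
def SameSCC {n : ℕ} (f : (Fin n → Bool) → (Fin n → Bool)) (u v : Fin n) : Prop :=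
  Relation.ReflTransGen (EdgeU f) u v ∧ Relation.ReflTransGen (EdgeU f) v u

/-- `u` belongs to an SCC of `G(f)` containing a positive cycle. -/
def InPosSCC {n : ℕ} (f : (Fin n → Bool) → (Fin n → Bool)) (u : Fin n) : Prop :=
  ∃ es, IsPosCycle f es ∧ ∀ v ∈ es.map Prod.fst, SameSCC f v u

open Classical in
/-- The modified network `f[I←y]`. -/
noncomputable def modifyBN {n : ℕ} (f : (Fin n → Bool) → (Fin n → Bool)) (I : Set (Fin n))
    (y : Fin n → Bool) : (Fin n → Bool) → (Fin n → Bool) :=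
  fun x i => if i ∈ I then y i else f x i

open Classical in
/-- The state `x_{[x_I = y_I]}`: equal to `y` on `I`, to `x` elsewhere. -/
noncomputable def patchState {n : ℕ} (x : Fin n → Bool) (I : Set (Fin n)) (y : Fin n → Bool) :
    Fin n → Bool :=
  fun i => if i ∈ I then y i else x i

section Aux

lemma exists_signed_edge {n : ℕ} (f : (Fin n → Bool) → (Fin n → Bool)) (v : Fin n) :
    ∀ a b : Fin n → Bool, f a v ≠ f b v →
    ∃ u, a u ≠ b u ∧ SignedEdge f u v (f a v == a u) := by
  classical
  suffices h : ∀ (m : ℕ) (a b : Fin n → Bool),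
      (Finset.univ.filter (fun u => a u ≠ b u)).card = m → f a v ≠ f b v →
      ∃ u, a u ≠ b u ∧ SignedEdge f u v (f a v == a u) by
    intro a b hfab
    exact h _ a b rfl hfab
  intro m
  induction m with
  | zero =>
    intro a b hm hfab
    exfalso
    apply hfab
    have : a = b := by
      funext u
      by_contra hu
      have : u ∈ Finset.univ.filter (fun u => a u ≠ b u) := by simp [hu]
      rw [Finset.card_eq_zero] at hm
      simp [hm] at this
    rw [this]
  | succ m ih =>
    intro a b hm hfab
    have hne : (Finset.univ.filter (fun u => a u ≠ b u)).Nonempty := by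
      rw [← Finset.card_pos, hm]; omega
    obtain ⟨u₀, hu₀⟩ := hne
    simp only [Finset.mem_filter, Finset.mem_univ, true_and] at hu₀
    set a' := Function.update a u₀ (b u₀) with ha'
    by_cases h : f a' v = f a v
    · have hfab' : f a' v ≠ f b v := by rw [h]; exact hfab
      have hcard : (Finset.univ.filter (fun u => a' u ≠ b u)).card = m := by
        have : Finset.univ.filter (fun u => a' u ≠ b u)
            = (Finset.univ.filter (fun u => a u ≠ b u)).erase u₀ := by
          ext u
          by_cases huu : u = u₀ <;>
            simp [Finset.mem_erase, huu, ha', Function.update_apply]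
        rw [this, Finset.card_erase_of_mem (by simp [hu₀]), hm]; omega
      obtain ⟨u, hu, hs⟩ := ih a' b hcard hfab'
      have huu0 : u ≠ u₀ := by
        intro e; rw [e] at hu; simp [ha'] at hu
      refine ⟨u, ?_, ?_⟩
      · rwa [ha', Function.update_apply, if_neg huu0] at hu
      · rwa [h, ha', Function.update_apply, if_neg huu0] at hs
    · refine ⟨u₀, hu₀, ?_⟩
      have hupd : Function.update a u₀ (a u₀) = a := Function.update_eq_self u₀ a
      have hfa' : f a' v = !(f a v) := by
        cases h2 : f a v <;> cases h3 : f a' v <;> simp_all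
      cases hb : a u₀ <;> cases hf : f a v
      · have hbu : b u₀ = true := by cases h4 : b u₀ <;> simp_all
        show SignedEdge f u₀ v true
        refine ⟨a, ?_, ?_⟩
        · rw [show Function.update a u₀ true = a' by rw [ha', hbu]]
          rw [hfa', hf]; rfl
        · rw [show Function.update a u₀ false = a by rw [← hb]; exact hupd, hf]
      · have hbu : b u₀ = true := by cases h4 : b u₀ <;> simp_all
        show SignedEdge f u₀ v false
        refine ⟨a, ?_, ?_⟩
        · rw [show Function.update a u₀ true = a' by rw [ha', hbu]]
          rw [hfa', hf]; rfl
        · rw [show Function.update a u₀ false = a by rw [← hb]; exact hupd, hf]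
      · have hbu : b u₀ = false := by cases h4 : b u₀ <;> simp_all
        show SignedEdge f u₀ v false
        refine ⟨a, ?_, ?_⟩
        · rw [show Function.update a u₀ true = a by rw [← hb]; exact hupd, hf]
        · rw [show Function.update a u₀ false = a' by rw [ha', hbu]]
          rw [hfa', hf]; rfl
      · have hbu : b u₀ = false := by cases h4 : b u₀ <;> simp_all
        show SignedEdge f u₀ v true
        refine ⟨a, ?_, ?_⟩
        · rw [show Function.update a u₀ true = a by rw [← hb]; exact hupd, hf]
        · rw [show Function.update a u₀ false = a' by rw [ha', hbu]]
          rw [hfa', hf]; rfl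

lemma parity_aux (c : ℕ → Bool) : ∀ k, ((List.range k).countP (fun j => c j != c (j+1))) % 2
    = (if c 0 = c k then 0 else 1) := by
  intro k
  induction k with
  | zero => simp
  | succ k ih =>
    rw [List.range_succ, List.countP_append]
    have h1 : List.countP (fun j => c j != c (j+1)) [k] = if c k = c (k+1) then 0 else 1 := by
      by_cases h : c k = c (k+1) <;> simp [List.countP_cons, h]
    rw [h1, Nat.add_mod, ih]
    cases hc0 : c 0 <;> cases hck : c k <;> cases hck1 : c (k+1) <;> simp

end Aux

/-- Two distinct fixed points differ on the vertices of some positive cycle. -/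
theorem stmt1 {n : ℕ} (f : (Fin n → Bool) → (Fin n → Bool)) (x y : Fin n → Bool)
    (hx : f x = x) (hy : f y = y) (hxy : x ≠ y) :
    ∃ es, IsPosCycle f es ∧ ∀ v ∈ es.map Prod.fst, x v ≠ y v := by
  classical
  have hfx : ∀ v, f x v = x v := fun v => congrFun hx v
  have hfy : ∀ v, f y v = y v := fun v => congrFun hy v
  have hD : ∀ v, ∃ u, x v ≠ y v → (x u ≠ y u ∧ SignedEdge f u v (x v == x u)) := by
    intro v
    by_cases hv : x v ≠ y v
    · obtain ⟨u, hu, hs⟩ := exists_signed_edge f v x y (by rw [hfx, hfy]; exact hv)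
      rw [hfx] at hs
      exact ⟨u, fun _ => ⟨hu, hs⟩⟩
    · exact ⟨v, fun h => absurd h hv⟩
  choose g hg using hD
  obtain ⟨v₀, hv₀⟩ : ∃ v, x v ≠ y v := Function.ne_iff.mp hxy
  have hiter : ∀ i, x (g^[i] v₀) ≠ y (g^[i] v₀) := by
    intro i
    induction i with
    | zero => exact hv₀
    | succ i ih => rw [Function.iterate_succ_apply']; exact (hg _ ih).1
  obtain ⟨i, j, hij, heq⟩ := Finite.exists_ne_map_eq_of_infinite (fun i : ℕ => g^[i] v₀)
  -- wlog i < j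
  obtain ⟨i, j, hij, heq⟩ : ∃ i j : ℕ, i < j ∧ g^[i] v₀ = g^[j] v₀ := by
    rcases lt_or_gt_of_ne hij with h | h
    · exact ⟨i, j, h, heq⟩
    · exact ⟨j, i, h, heq.symm⟩
  obtain ⟨k, hkj⟩ : ∃ k, k + 1 + i = j := ⟨j - i - 1, by omega⟩
  set W : ℕ → Fin n := fun m => g^[m] (g^[i] v₀) with hW
  have hWk : W (k + 1) = W 0 := by
    show g^[k+1] (g^[i] v₀) = g^[0] (g^[i] v₀)
    rw [← Function.iterate_add_apply, ← Function.iterate_add_apply, hkj,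
      show 0 + i = i from by omega]
    exact heq.symm
  have hWsucc : ∀ m, W (m + 1) = g (W m) := by
    intro m; simp only [hW]; rw [Function.iterate_succ_apply']
  have hWD : ∀ m, x (W m) ≠ y (W m) := by
    intro m
    simp only [hW, ← Function.iterate_add_apply]
    exact hiter (m + i)
  have hEdge : ∀ m, SignedEdge f (W (m+1)) (W m) (x (W m) == x (W (m+1))) := by
    intro m
    rw [hWsucc m]
    exact (hg _ (hWD m)).2
  refine ⟨(List.range (k+1)).map
    (fun j => (W (k+1-j), W (k+1-j-1), x (W (k+1-j-1)) == x (W (k+1-j)))),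
    ⟨⟨?_, ?_, ?_, ?_⟩, ?_⟩, ?_⟩
  · simp
  · -- edges
    intro e he
    simp only [List.mem_map, List.mem_range] at he
    obtain ⟨m, hm, rfl⟩ := he
    have h1 : k + 1 - m = (k + 1 - m - 1) + 1 := by omega
    rw [h1]
    exact hEdge (k + 1 - m - 1)
  · -- chain
    unfold List.Chain'
    rw [List.isChain_map, List.isChain_range_succ]
    intro m hm
    exact congrArg W (by omega)
  · -- getLast? / head?
    have hlast : (List.map
        (fun j => (W (k+1-j), W (k+1-j-1), x (W (k+1-j-1)) == x (W (k+1-j))))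
        (List.range (k+1))).getLast?
        = some (W (k+1-k), W (k+1-k-1), x (W (k+1-k-1)) == x (W (k+1-k))) := by
      rw [List.range_succ, List.map_append]
      simp
    have hhead : (List.map
        (fun j => (W (k+1-j), W (k+1-j-1), x (W (k+1-j-1)) == x (W (k+1-j))))
        (List.range (k+1))).head?
        = some (W (k+1-0), W (k+1-0-1), x (W (k+1-0-1)) == x (W (k+1-0))) := by
      rw [List.range_succ_eq_map]
      simp
    rw [hlast, hhead]
    simp only [Option.map_some]
    rw [show k+1-k-1 = 0 by omega, show k+1-0 = k+1 by omega, hWk]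
  · -- even count of negatives
    rw [List.countP_map]
    have hcong : List.countP
        ((fun (e : Fin n × Fin n × Bool) => !e.2.2) ∘
          (fun j => (W (k+1-j), W (k+1-j-1), x (W (k+1-j-1)) == x (W (k+1-j)))))
          (List.range (k+1))
        = List.countP
            (fun j => (fun j => x (W (k+1 - j))) j != (fun j => x (W (k+1 - j))) (j+1))
            (List.range (k+1)) := by
      apply List.countP_congr
      intro m hm
      simp only [Function.comp_apply]
      have h2 : k + 1 - (m + 1) = k + 1 - m - 1 := by omega
      rw [h2]
      cases x (W (k + 1 - m - 1)) <;> cases x (W (k + 1 - m)) <;> rfl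
    rw [hcong]
    rw [Nat.even_iff]
    rw [parity_aux (fun j => x (W (k + 1 - j))) (k + 1)]
    simp only [Nat.sub_zero, Nat.sub_self]
    rw [hWk]
    simp
  · -- vertices differ
    intro v' hv'
    simp only [List.map_map, List.mem_map, List.mem_range, Function.comp_apply] at hv'
    obtain ⟨m, hm, rfl⟩ := hv'
    exact hWD (k + 1 - m)
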